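/- Let K = ℚ(ζ₅) be the fifth cyclotomic field with ring of integers 𝓞. For every unit u of 𝓞 and every field embedding τ : K → ℂ, there exists an integer n ∈ ℤ such that |τ(u)| = ((1 + √5)/2)^n. -/

import Mathlib

open NumberField Polynomial Real goldenRatio

noncomputable section

private lemma s5 : Real.sqrt 5 ^ 2 = 5 := Real.sq_sqrt (by norm_num)
private lemma s5pos : (0:ℝ) < Real.sqrt 5 := Real.sqrt_pos.mpr (by norm_num)
private lemma irr5 : Irrational (Real.sqrt 5) :=
  (by norm_num : Nat.Prime 5).irrational_sqrt

private lemma quniq {a b p q : ℚ} (h : (a:ℝ) + b * Real.sqrt 5 = p + q * Real.sqrt 5) :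
    a = p ∧ b = q := by
  by_cases hbq : b = q
  · subst hbq
    refine ⟨?_, rfl⟩
    have : (a:ℝ) = p := by linarith
    exact_mod_cast this
  · exfalso
    apply irr5
    refine ⟨(a - p) / (q - b), ?_⟩
    have hqb : ((q:ℝ) - b) ≠ 0 := by
      intro h0
      exact hbq (by exact_mod_cast (sub_eq_zero.mp h0).symm)
    push_cast
    field_simp
    linarith

private lemma int_gold : IsIntegral ℤ goldenRatio := by
  refine ⟨X ^ 2 - (X + 1), ?_, ?_⟩
  · apply Polynomial.monic_X_pow_sub
    rw [show (X + 1 : ℤ[X]) = X + C 1 by simp, Polynomial.degree_X_add_C]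
    decide
  · simp only [eval₂_sub, eval₂_add, eval₂_pow, eval₂_X, eval₂_one]
    have := goldenRatio_sq
    simp only [goldenRatio] at *
    linarith

private lemma gold_inv_eq : goldenRatio⁻¹ = goldenRatio - 1 := by
  have h : goldenRatio * (goldenRatio - 1) = 1 := by
    linear_combination goldenRatio_sq
  exact inv_eq_of_mul_eq_one_right h

private lemma int_gold_inv : IsIntegral ℤ (goldenRatio⁻¹) := by
  rw [gold_inv_eq]
  exact int_gold.sub isIntegral_one

private lemma int_gold_zpow (k : ℤ) : IsIntegral ℤ (goldenRatio ^ k) := by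
  obtain ⟨n, rfl | rfl⟩ := k.eq_nat_or_neg
  · rw [zpow_natCast]; exact int_gold.pow n
  · rw [zpow_neg, ← inv_zpow, zpow_natCast]; exact int_gold_inv.pow n

/-- powers of φ and the conjugate relation -/
private lemma rep_phi_zpow (m : ℤ) :
    ∃ p q : ℚ, goldenRatio ^ m = (p:ℝ) + q * Real.sqrt 5 ∧
      (-goldenRatio) ^ (-m) = (p:ℝ) - q * Real.sqrt 5 := by
  have hg : goldenRatio ≠ 0 := goldenRatio_ne_zero
  have hng : -goldenRatio ≠ 0 := neg_ne_zero.mpr hg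
  induction m using Int.induction_on with
  | zero => exact ⟨1, 0, by norm_num, by norm_num⟩
  | succ i ih =>
    obtain ⟨p, q, h1, h2⟩ := ih
    refine ⟨(p + 5*q)/2, (p + q)/2, ?_, ?_⟩
    · rw [zpow_add_one₀ hg, h1]
      push_cast
      simp only [goldenRatio]
      linear_combination ((q:ℝ)/2) * s5
    · have : (-(i+1:ℤ)) = (-(i:ℤ)) + (-1) := by ring
      rw [this, zpow_add₀ hng, h2, zpow_neg_one]
      have hval : (-goldenRatio)⁻¹ = (1 - Real.sqrt 5)/2 := by
        rw [← neg_inv, gold_inv_eq]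
        simp only [goldenRatio]
        ring
      rw [hval]
      push_cast
      linear_combination ((q:ℝ)/2) * s5
  | pred i ih =>
    obtain ⟨p, q, h1, h2⟩ := ih
    refine ⟨(5*q - p)/2, (p - q)/2, ?_, ?_⟩
    · have : (-(i:ℤ) - 1) = (-(i:ℤ)) + (-1) := by ring
      rw [this, zpow_add₀ hg, h1, zpow_neg_one, gold_inv_eq]
      push_cast
      simp only [goldenRatio]
      linear_combination ((q:ℝ)/2) * s5
    · have : (-(-(i:ℤ) - 1)) = (-(-(i:ℤ))) + 1 := by ring
      rw [this, zpow_add_one₀ hng, h2]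
      push_cast
      simp only [goldenRatio]
      linear_combination ((q:ℝ)/2) * s5

/-- For an irrational real `y`, integral over `ℤ`, satisfying a monic rational quadratic,
the coefficients of that quadratic are integers. -/
private lemma quad_coeffs (y : ℝ) (hirr : Irrational y) (hint : IsIntegral ℤ y)
    (T N : ℚ) (heq : y ^ 2 - (T:ℝ) * y + (N:ℝ) = 0) :
    ∃ t n : ℤ, (T:ℚ) = t ∧ (N:ℚ) = n := by
  set P : ℚ[X] := X ^ 2 - C T * X + C N with hP
  have hPmonic : P.Monic := by
    have : P = X ^ 2 + (C (-T) * X + C N) := by rw [hP]; simp only [map_neg]; ring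
    rw [this]
    apply monic_X_pow_add
    apply lt_of_le_of_lt (degree_add_le _ _)
    rw [sup_lt_iff]
    constructor
    · refine lt_of_le_of_lt (degree_C_mul_X_le _) ?_
      decide
    · exact lt_of_le_of_lt degree_C_le (by decide)
  have hP0 : P ≠ 0 := hPmonic.ne_zero
  have haeval : aeval y P = 0 := by
    rw [hP]
    simp only [map_add, map_sub, map_pow, map_mul, aeval_X, aeval_C]
    rw [show (algebraMap ℚ ℝ) T = (T:ℝ) from by norm_num,
        show (algebraMap ℚ ℝ) N = (N:ℝ) from by norm_num]
    linarith [heq]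
  have hyintQ : IsIntegral ℚ y := (isAlgebraic_iff_isIntegral).mp ⟨P, hP0, haeval⟩
  have hdvd : minpoly ℚ y ∣ P := minpoly.dvd ℚ y haeval
  have hmpmonic : (minpoly ℚ y).Monic := minpoly.monic hyintQ
  have hdegP : P.natDegree = 2 := by
    rw [hP]; compute_degree!
  -- minpoly is not degree ≤ 1
  have hdeg_ge : 2 ≤ (minpoly ℚ y).natDegree := by
    by_contra hlt
    push_neg at hlt
    have h1 : (minpoly ℚ y).natDegree ≤ 1 := by omega
    have hdeg1 : (minpoly ℚ y).natDegree = 1 := by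
      have := minpoly.natDegree_pos hyintQ; omega
    have hc1 : (minpoly ℚ y).coeff 1 = 1 := by
      conv_lhs => rw [← hdeg1]
      exact hmpmonic.coeff_natDegree
    have := Polynomial.eq_X_add_C_of_natDegree_le_one h1
    rw [hc1, map_one, one_mul] at this
    have hroot := minpoly.aeval ℚ y
    rw [this] at hroot
    simp only [map_add, aeval_X, aeval_C] at hroot
    apply hirr
    refine ⟨-(minpoly ℚ y).coeff 0, ?_⟩
    have : (algebraMap ℚ ℝ) ((minpoly ℚ y).coeff 0) = ((minpoly ℚ y).coeff 0 : ℝ) := by norm_num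
    rw [this] at hroot
    push_cast
    linarith
  have hdeg_le : (minpoly ℚ y).natDegree ≤ 2 := by
    rw [← hdegP]
    exact natDegree_le_of_dvd hdvd hP0
  have hdeg : (minpoly ℚ y).natDegree = 2 := le_antisymm hdeg_le hdeg_ge
  -- minpoly = P
  obtain ⟨q, hq⟩ := hdvd
  have hq0 : q ≠ 0 := by
    intro h; rw [h, mul_zero] at hq; exact hP0 hq
  have hqdeg : q.natDegree = 0 := by
    have := natDegree_mul (minpoly.ne_zero hyintQ) hq0
    rw [← hq, hdegP, hdeg] at this
    omega
  have hqC : q = C (q.coeff 0) := eq_C_of_natDegree_eq_zero hqdeg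
  have hql : q.coeff 0 = 1 := by
    have h1 : P.leadingCoeff = (minpoly ℚ y).leadingCoeff * q.leadingCoeff :=
      by rw [hq]; exact leadingCoeff_mul _ _
    rw [hPmonic.leadingCoeff, hmpmonic.leadingCoeff, one_mul] at h1
    rw [hqC] at h1 ⊢
    simpa using h1.symm
  have hPeq : P = minpoly ℚ y := by
    rw [hq, hqC, hql, map_one, mul_one]
  -- coefficients are integers
  have hmap : minpoly ℚ y = map (algebraMap ℤ ℚ) (minpoly ℤ y) := by
    simpa using minpoly.isIntegrallyClosed_eq_field_fractions ℚ ℝ hint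
  refine ⟨-((minpoly ℤ y).coeff 1), (minpoly ℤ y).coeff 0, ?_, ?_⟩
  · have : P.coeff 1 = -T := by rw [hP]; simp [coeff_X_pow]
    rw [hPeq, hmap] at this
    simp only [coeff_map, algebraMap_int_eq, eq_intCast] at this
    push_cast
    linarith
  · have : P.coeff 0 = N := by rw [hP]; simp [coeff_X_pow]
    rw [hPeq, hmap] at this
    simp only [coeff_map, algebraMap_int_eq, eq_intCast] at this
    push_cast
    linarith

/-- a unit of ℤ[φ] in the window [1, φ) is 1 -/
private lemma keyCore (y : ℝ) (a b : ℚ) (hy : y = (a:ℝ) + b * Real.sqrt 5)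
    (h1 : 1 ≤ y) (h2 : y < goldenRatio)
    (hint : IsIntegral ℤ y) (hinv : IsIntegral ℤ y⁻¹) : y = 1 := by
  have hy0 : y ≠ 0 := by intro h; rw [h] at h1; norm_num at h1
  by_cases hb : b = 0
  · -- rational case
    subst hb
    rw [Rat.cast_zero, zero_mul, add_zero] at hy
    have hintq : IsIntegral ℤ a := by
      have : (algebraMap ℚ ℝ) a = y := by rw [hy]; norm_num
      rw [← isIntegral_algebraMap_iff (algebraMap ℚ ℝ).injective, this]
      exact hint
    obtain ⟨z, hz⟩ := IsIntegrallyClosed.isIntegral_iff.mp hintq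
    have hza : (z:ℚ) = a := by rw [← hz]; norm_num
    have hz1 : 1 ≤ (z:ℝ) := by rw [hy] at h1; exact_mod_cast (by exact_mod_cast hza ▸ h1)
    have hz2 : (z:ℝ) < 2 := by
      have := goldenRatio_lt_two
      have : y < 2 := lt_trans h2 this
      rw [hy] at this
      exact_mod_cast (by exact_mod_cast hza ▸ this)
    have hz1' : 1 ≤ z := by exact_mod_cast hz1
    have hz2' : z < 2 := by exact_mod_cast hz2
    have : z = 1 := by omega
    rw [hy, ← hza, this]; norm_num
  · -- irrational case
    have hirr : Irrational y := by
      rw [hy, add_comm]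
      exact ((irr5.ratCast_mul hb).add_ratCast a)
    set T : ℚ := 2 * a with hT
    set N : ℚ := a^2 - 5*b^2 with hN
    have heq : y ^ 2 - (T:ℝ) * y + (N:ℝ) = 0 := by
      rw [hy, hT, hN]; push_cast; linear_combination ((b:ℝ)^2) * s5
    have hN0 : N ≠ 0 := by
      intro h0
      have h5 : ((a:ℝ) - b * Real.sqrt 5) ≠ 0 := by
        intro hz
        apply irr5
        refine ⟨a / b, ?_⟩
        have hbR : (b:ℝ) ≠ 0 := by exact_mod_cast hb
        push_cast
        field_simp
        linarith
      have : (N:ℝ) = y * ((a:ℝ) - b * Real.sqrt 5) := by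
        rw [hy, hN]; push_cast; linear_combination ((b:ℝ)^2) * s5
      rw [h0] at this
      push_cast at this
      exact (mul_ne_zero hy0 h5) this.symm
    obtain ⟨t, n, hTt, hNn⟩ := quad_coeffs y hirr hint T N heq
    -- inverse
    have hirr' : Irrational y⁻¹ := by
      intro ⟨r, hr⟩
      apply hirr
      refine ⟨r⁻¹, ?_⟩
      rw [Rat.cast_inv, hr, inv_inv]
    have heq' : (y⁻¹) ^ 2 - ((T/N :ℚ):ℝ) * y⁻¹ + ((1/N:ℚ):ℝ) = 0 := by
      have hNR : ((N:ℚ):ℝ) ≠ 0 := by exact_mod_cast hN0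
      push_cast
      have hy1 : y * y⁻¹ = 1 := mul_inv_cancel₀ hy0
      have hN1 : ((N:ℚ):ℝ) * ((N:ℚ):ℝ)⁻¹ = 1 := mul_inv_cancel₀ hNR
      linear_combination (((N:ℚ):ℝ)⁻¹ * y⁻¹ ^ 2) * heq - y⁻¹ ^ 2 * hN1 + ((T:ℝ) * ((N:ℚ):ℝ)⁻¹ * y⁻¹ - ((N:ℚ):ℝ)⁻¹ * (1 + y⁻¹ * y)) * hy1
    obtain ⟨t', n', hTt', hNn'⟩ := quad_coeffs y⁻¹ hirr' hinv (T/N) (1/N) heq'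
    -- N = ±1
    have hnn' : (n : ℚ) * (n' : ℚ) = 1 := by
      rw [← hNn, ← hNn']
      field_simp
    have hnunit : n = 1 ∨ n = -1 := by
      have hmn : n * n' = 1 := by exact_mod_cast hnn'
      exact Int.eq_one_or_neg_one_of_mul_eq_one hmn
    -- bounds on t
    have hrel : y ^ 2 = (t:ℝ) * y - (n:ℝ) := by
      have h1' : (T:ℝ) = (t:ℝ) := by exact_mod_cast hTt
      have h2' : (N:ℝ) = (n:ℝ) := by exact_mod_cast hNn
      rw [← h1', ← h2']; linarith [heq]
    have hyconj : y * ((t:ℝ) - y) = (n:ℝ) := by nlinarith [hrel]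
    have habs : |(n:ℝ)| = 1 := by
      rcases hnunit with h | h <;> rw [h] <;> norm_num
    have hconj_bound : |(t:ℝ) - y| ≤ 1 := by
      have : |y| * |(t:ℝ) - y| = 1 := by rw [← abs_mul, hyconj, habs]
      have hy1 : 1 ≤ |y| := by rw [abs_of_pos (by linarith : (0:ℝ) < y)]; exact h1
      nlinarith [abs_nonneg ((t:ℝ) - y)]
    have ht0 : (0:ℝ) ≤ t := by
      have := abs_le.mp hconj_bound
      linarith
    have ht3 : (t:ℝ) < 3 := by
      have := abs_le.mp hconj_bound
      have := goldenRatio_lt_two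
      linarith
    have ht0' : 0 ≤ t := by exact_mod_cast ht0
    have ht3' : t < 3 := by exact_mod_cast ht3
    have hg2 : goldenRatio ^ 2 = goldenRatio + 1 := goldenRatio_sq
    interval_cases t <;> rcases hnunit with hn1 | hn1 <;>
        rw [hn1] at hrel <;> push_cast at hrel
    · exfalso; nlinarith [sq_nonneg y]
    · -- t=0, n=-1 : y^2 = 1
      have hfac : (y - 1) * (y + 1) = 0 := by linear_combination hrel
      rcases mul_eq_zero.mp hfac with h | h
      · linarith
      · exfalso; linarith
    · exfalso; nlinarith [sq_nonneg (y - 1/2)]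
    · -- t=1, n=-1 : y = φ contradiction
      exfalso
      have hfac : (y - goldenRatio) * (y + goldenRatio - 1) = 0 := by
        linear_combination hrel - hg2
      rcases mul_eq_zero.mp hfac with h | h
      · linarith
      · have := goldenRatio_pos; linarith
    · -- t=2, n=1 : (y-1)^2 = 0
      have hsq : (y - 1) ^ 2 = 0 := by linear_combination hrel
      have h0 : y - 1 = 0 := by
        by_contra hne
        have h : 0 < (y - 1) ^ 2 := by positivity
        rw [hsq] at h
        exact lt_irrefl 0 h
      linarith
    · -- t=2, n=-1 : y = 1+√2 > φ contradiction
      exfalso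
      have hylt : y ^ 2 < goldenRatio ^ 2 :=
        pow_lt_pow_left₀ h2 (by linarith) (by norm_num)
      have := goldenRatio_lt_two
      linarith [hg2]

private lemma keyA (x : ℝ) (a b : ℚ) (hx : x = (a:ℝ) + b * Real.sqrt 5) (hpos : 0 < x)
    (hint : IsIntegral ℤ x) (hinv : IsIntegral ℤ x⁻¹) :
    ∃ m : ℤ, x = goldenRatio ^ m := by
  set m := ⌊Real.logb goldenRatio x⌋ with hm
  have hg1 : 1 < goldenRatio := one_lt_goldenRatio
  have hgpos : (0:ℝ) < goldenRatio := goldenRatio_pos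
  have hgne : goldenRatio ≠ 0 := goldenRatio_ne_zero
  have hlogb : goldenRatio ^ (Real.logb goldenRatio x) = x :=
    Real.rpow_logb hgpos (ne_of_gt hg1) hpos
  have hlow : goldenRatio ^ (m:ℤ) ≤ x := by
    rw [← Real.rpow_intCast, ← hlogb]
    exact Real.rpow_le_rpow_left_iff hg1 |>.mpr (Int.floor_le _)
  have hhigh : x < goldenRatio ^ (m + 1 : ℤ) := by
    rw [← Real.rpow_intCast, ← hlogb]
    refine Real.rpow_lt_rpow_left_iff hg1 |>.mpr ?_
    push_cast
    exact Int.lt_floor_add_one _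
  set y := x * goldenRatio ^ (-m : ℤ) with hy
  have hzpos : (0:ℝ) < goldenRatio ^ (m:ℤ) := zpow_pos hgpos m
  have h1 : 1 ≤ y := by
    rw [hy, zpow_neg, ← div_eq_mul_inv]
    exact (one_le_div hzpos).mpr hlow
  have h2 : y < goldenRatio := by
    rw [hy, zpow_neg, ← div_eq_mul_inv, div_lt_iff₀ hzpos]
    rw [zpow_add_one₀ hgne] at hhigh
    linarith
  obtain ⟨p, q, hpq, _⟩ := rep_phi_zpow (-m)
  have hyrep : y = ((a*p + 5*b*q : ℚ):ℝ) + ((a*q + b*p : ℚ):ℝ) * Real.sqrt 5 := by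
    rw [hy, hx, hpq]
    push_cast
    linear_combination ((b:ℝ) * (q:ℝ)) * s5
  have hyint : IsIntegral ℤ y := hint.mul (int_gold_zpow (-m))
  have hyinv : IsIntegral ℤ y⁻¹ := by
    have : y⁻¹ = x⁻¹ * goldenRatio ^ (m:ℤ) := by
      rw [hy, mul_inv, zpow_neg, inv_inv]
    rw [this]
    exact hinv.mul (int_gold_zpow m)
  have hy1 : y = 1 := keyCore y _ _ hyrep h1 h2 hyint hyinv
  refine ⟨m, ?_⟩
  have hxy : x * goldenRatio ^ (-m:ℤ) = 1 := by rw [← hy, hy1]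
  rw [zpow_neg, ← div_eq_mul_inv] at hxy
  exact (div_eq_one_iff_eq (ne_of_gt hzpos)).mp hxy

private lemma pow5_eq_one {r : ℝ} (h0 : 0 ≤ r) (h : r ^ 5 = 1) : r = 1 := by
  have hfac : (r - 1) * (r^4 + r^3 + r^2 + r + 1) = 0 := by linear_combination h
  rcases mul_eq_zero.mp hfac with h' | h'
  · linarith
  · exfalso
    have h4 : 0 ≤ r^4 := by positivity
    have h3 : 0 ≤ r^3 := by positivity
    have h2 : 0 ≤ r^2 := by positivity
    linarith

set_option maxHeartbeats 1000000

/-- For `K = ℚ(ζ₅)` with ring of integers `𝓞`: for every unit `u` of `𝓞` and every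
embedding `τ : K → ℂ`, there is `n : ℤ` with `|τ u| = ((1 + √5)/2) ^ n`. -/
theorem stmt_12 (K : Type*) [Field K] [NumberField K] [IsCyclotomicExtension {5} ℚ K]
    (u : (𝓞 K)ˣ) (τ : K →+* ℂ) :
    ∃ n : ℤ, ‖τ ((u : 𝓞 K) : K)‖ = ((1 + Real.sqrt 5) / 2) ^ n := by
  classical
  set ζ : K := IsCyclotomicExtension.zeta 5 ℚ K with hζdef
  have hζp : IsPrimitiveRoot ζ 5 := IsCyclotomicExtension.zeta_spec 5 ℚ K
  have hζ : IsPrimitiveRoot ζ 5 := by simpa using hζp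
  have hζ5 : ζ ^ 5 = 1 := by
    have := hζ.pow_eq_one
    simpa using this
  have hζ1 : ζ ≠ 1 := hζ.ne_one (by norm_num)
  have hsumζ : ζ^4 + ζ^3 + ζ^2 + ζ + 1 = 0 := by
    have hfac : (ζ - 1) * (ζ^4 + ζ^3 + ζ^2 + ζ + 1) = 0 := by linear_combination hζ5
    rcases mul_eq_zero.mp hfac with h | h
    · exact absurd (sub_eq_zero.mp h) hζ1
    · exact h
  -- the automorphism ζ ↦ ζ²
  have hirr : Irreducible (cyclotomic 5 ℚ) := cyclotomic.irreducible_rat (by norm_num)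
  have hmin : cyclotomic 5 ℚ = minpoly ℚ ζ := by
    exact hζ.minpoly_eq_cyclotomic_of_irreducible hirr
  have hζ2 : IsPrimitiveRoot (ζ^2) 5 := hζ.pow_of_coprime 2 (by norm_num)
  have hroot : aeval (ζ^2) (minpoly ℚ (hζp.powerBasis ℚ).gen) = 0 := by
    rw [IsPrimitiveRoot.powerBasis_gen, ← hmin, aeval_def, eval₂_eq_eval_map, map_cyclotomic]
    exact hζ2.isRoot_cyclotomic (by norm_num)
  set σ : K →ₐ[ℚ] K := (hζp.powerBasis ℚ).lift (ζ^2) hroot with hσdef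
  have hσζ : σ ζ = ζ^2 := by
    have h := PowerBasis.lift_gen (hζp.powerBasis ℚ) (ζ^2) hroot
    rwa [IsPrimitiveRoot.powerBasis_gen] at h
  -- coordinates of v
  set v : K := ((u : 𝓞 K) : K) with hv
  have htop : Algebra.adjoin ℚ ({ζ} : Set K) = ⊤ :=
    IsCyclotomicExtension.adjoin_primitive_root_eq_top hζp
  have hvmem : v ∈ Algebra.adjoin ℚ ({ζ} : Set K) := by rw [htop]; exact Algebra.mem_top
  obtain ⟨c0, c1, c2, c3, hvrep⟩ :
      ∃ c0 c1 c2 c3 : ℚ, v = (c0:K) + (c1:K)*ζ + (c2:K)*ζ^2 + (c3:K)*ζ^3 := by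
    refine Algebra.adjoin_induction
      (p := fun t _ => ∃ c0 c1 c2 c3 : ℚ, t = (c0:K) + (c1:K)*ζ + (c2:K)*ζ^2 + (c3:K)*ζ^3)
      ?_ ?_ ?_ ?_ hvmem
    · intro t ht
      rw [Set.mem_singleton_iff] at ht
      subst ht
      exact ⟨0, 1, 0, 0, by push_cast; ring⟩
    · intro r
      refine ⟨r, 0, 0, 0, ?_⟩
      rw [eq_ratCast (algebraMap ℚ K) r]
      push_cast
      ring
    · intro s t hs ht ihx ihy
      obtain ⟨c0, c1, c2, c3, hx'⟩ := ihx
      obtain ⟨d0, d1, d2, d3, hy'⟩ := ihy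
      exact ⟨c0+d0, c1+d1, c2+d2, c3+d3, by rw [hx', hy']; push_cast; ring⟩
    · intro s t hs ht ihx ihy
      obtain ⟨c0, c1, c2, c3, hx'⟩ := ihx
      obtain ⟨d0, d1, d2, d3, hy'⟩ := ihy
      refine ⟨c3*d2 - c3*d1 + c2*d3 - c2*d2 - c1*d3 + c0*d0,
        c3*d3 - c3*d1 - c2*d2 - c1*d3 + c1*d0 + c0*d1,
        -(c3*d1) - c2*d2 + c2*d0 - c1*d3 + c1*d1 + c0*d2,
        -(c3*d1) + c3*d0 - c2*d2 + c2*d1 - c1*d3 + c1*d2 + c0*d3, ?_⟩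
      rw [hx', hy']
      push_cast
      linear_combination ((-(c3:K)*(d2:K) + (c3:K)*(d1:K) - (c2:K)*(d3:K) + (c2:K)*(d2:K) + (c1:K)*(d3:K)) + (-(c3:K)*(d3:K) + (c3:K)*(d2:K) + (c2:K)*(d3:K)) * ζ + ((c3:K)*(d3:K)) * ζ^2) * hsumζ
  -- complex side
  set z : ℂ := τ ζ with hz
  have hz5 : z ^ 5 = 1 := by rw [hz, ← map_pow, hζ5, map_one]
  have hz1 : z ≠ 1 := by
    intro h
    exact hζ1 (τ.injective (by rw [← hz, h, map_one]))
  have hz0 : z ≠ 0 := by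
    intro h
    rw [h] at hz5
    norm_num at hz5
  have hsum : z^4 + z^3 + z^2 + z + 1 = 0 := by
    have hfac : (z - 1) * (z^4 + z^3 + z^2 + z + 1) = 0 := by linear_combination hz5
    rcases mul_eq_zero.mp hfac with h | h
    · exact absurd (sub_eq_zero.mp h) hz1
    · exact h
  have hnormSq : Complex.normSq z = 1 := by
    apply pow5_eq_one (Complex.normSq_nonneg z)
    rw [← map_pow, hz5, map_one]
  have hzconj : (starRingEnd ℂ) z = z^4 := by
    apply mul_left_cancel₀ hz0
    rw [Complex.mul_conj, hnormSq]
    rw [show z * z^4 = z^5 by ring, hz5]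
    norm_num
  -- expansions
  have hτv : τ v = (c0:ℂ) + (c1:ℂ) * z + (c2:ℂ) * z^2 + (c3:ℂ) * z^3 := by
    rw [hvrep]
    simp only [map_add, map_mul, map_pow, map_ratCast, ← hz]
  have hτvc : (starRingEnd ℂ) (τ v) =
      (c0:ℂ) + (c1:ℂ) * z^4 + (c2:ℂ) * (z^4)^2 + (c3:ℂ) * (z^4)^3 := by
    rw [hτv]
    simp only [map_add, map_mul, map_pow, map_ratCast, hzconj]
  set τ₂ : K →+* ℂ := τ.comp σ.toRingHom with hτ₂def
  have hτ₂v : τ₂ v = (c0:ℂ) + (c1:ℂ) * z^2 + (c2:ℂ) * (z^2)^2 + (c3:ℂ) * (z^2)^3 := by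
    rw [hτ₂def]
    simp only [RingHom.comp_apply, AlgHom.toRingHom_eq_coe, RingHom.coe_coe]
    rw [hvrep]
    simp only [map_add, map_mul, map_pow, map_ratCast, hσζ, ← hz]
  have hτ₂vc : (starRingEnd ℂ) (τ₂ v) =
      (c0:ℂ) + (c1:ℂ) * (z^4)^2 + (c2:ℂ) * ((z^4)^2)^2 + (c3:ℂ) * ((z^4)^2)^3 := by
    rw [hτ₂v]
    simp only [map_add, map_mul, map_pow, map_ratCast, hzconj]
  -- the real quadratic quantity
  set r : ℂ := 2*(z + z^4) + 1 with hr
  have hr2 : r^2 = 5 := by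
    rw [hr]
    linear_combination ((-4:ℂ) + 8*z - 4*z^3 + 4*z^4) * hsum
  have hrconj : (starRingEnd ℂ) r = r := by
    rw [hr]
    simp only [map_add, map_mul, map_pow, map_one, map_ofNat, hzconj]
    linear_combination (-2*z + 2*z^2 - 2*z^6 + 2*z^7 - 2*z^11 + 2*z^12) * hsum
  set A : ℚ := (c0^2+c1^2+c2^2+c3^2 - c0*c1 - c1*c2 - c2*c3)
      - (c0*c2 + c0*c3 + c1*c3 - c0*c1 - c1*c2 - c2*c3)/2 with hA
  set B : ℚ := -(c0*c2 + c0*c3 + c1*c3 - c0*c1 - c1*c2 - c2*c3)/2 with hB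
  have hX : τ v * (starRingEnd ℂ) (τ v) = (A:ℂ) + (B:ℂ) * r := by
    rw [hτvc, hτv, hA, hB, hr]
    push_cast
    linear_combination ((-(c3:ℂ)*(c3:ℂ) - (c2:ℂ)*(c2:ℂ) + (c1:ℂ)*(c3:ℂ) - (c1:ℂ)*(c1:ℂ) + (c0:ℂ)*(c3:ℂ) + (c0:ℂ)*(c2:ℂ)) + ((c3:ℂ)*(c3:ℂ) - (c2:ℂ)*(c3:ℂ) + (c2:ℂ)*(c2:ℂ) - (c1:ℂ)*(c2:ℂ) + (c1:ℂ)*(c1:ℂ)) * z^1 + ((c2:ℂ)*(c3:ℂ) - (c1:ℂ)*(c3:ℂ) + (c1:ℂ)*(c2:ℂ) - (c0:ℂ)*(c3:ℂ)) * z^2 + ((c0:ℂ)*(c3:ℂ) - (c0:ℂ)*(c2:ℂ)) * z^3 + (-(c2:ℂ)*(c3:ℂ) + (c1:ℂ)*(c3:ℂ) - (c1:ℂ)*(c2:ℂ) + (c0:ℂ)*(c2:ℂ)) * z^4 + (-(c3:ℂ)*(c3:ℂ) + (c2:ℂ)*(c3:ℂ) - (c2:ℂ)*(c2:ℂ) +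 (c1:ℂ)*(c2:ℂ)) * z^5 + ((c3:ℂ)*(c3:ℂ) - (c2:ℂ)*(c3:ℂ) + (c2:ℂ)*(c2:ℂ)) * z^6 + ((c2:ℂ)*(c3:ℂ) - (c0:ℂ)*(c3:ℂ)) * z^7 + (-(c1:ℂ)*(c3:ℂ) + (c0:ℂ)*(c3:ℂ)) * z^8 + (-(c2:ℂ)*(c3:ℂ) + (c1:ℂ)*(c3:ℂ)) * z^9 + (-(c3:ℂ)*(c3:ℂ) + (c2:ℂ)*(c3:ℂ)) * z^10 + ((c3:ℂ)*(c3:ℂ)) * z^11) * hsum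
  have hY : τ₂ v * (starRingEnd ℂ) (τ₂ v) = (A:ℂ) - (B:ℂ) * r := by
    rw [hτ₂vc, hτ₂v, hA, hB, hr]
    push_cast
    linear_combination ((-(c3:ℂ)*(c3:ℂ) + (c2:ℂ)*(c3:ℂ) - (c2:ℂ)*(c2:ℂ) + (c1:ℂ)*(c2:ℂ) - (c1:ℂ)*(c1:ℂ) + (c0:ℂ)*(c1:ℂ)) + ((c3:ℂ)*(c3:ℂ) + (c2:ℂ)*(c2:ℂ) - (c1:ℂ)*(c3:ℂ) + (c1:ℂ)*(c1:ℂ) - (c0:ℂ)*(c3:ℂ) - (c0:ℂ)*(c2:ℂ)) * z^1 + (-(c2:ℂ)*(c3:ℂ) + (c1:ℂ)*(c3:ℂ) - (c1:ℂ)*(c2:ℂ) + (c0:ℂ)*(c3:ℂ) + (c0:ℂ)*(c2:ℂ)) * z^2 + (-(c0:ℂ)*(c1:ℂ)) * z^3 + ((c2:ℂ)*(c3:ℂ) - (c1:ℂ)*(c3:ℂ) + (c1:ℂ)*(c2:ℂ) - (c0:ℂ)*(c3:ℂ) + (c0:ℂ)*(c1:ℂ)) * z^4 + (-(c3:ℂ)*(c3:ℂ)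 - (c2:ℂ)*(c2:ℂ) + (c1:ℂ)*(c3:ℂ) - (c1:ℂ)*(c1:ℂ) + (c0:ℂ)*(c3:ℂ)) * z^5 + ((c3:ℂ)*(c3:ℂ) + (c2:ℂ)*(c2:ℂ) - (c1:ℂ)*(c3:ℂ) + (c1:ℂ)*(c1:ℂ) - (c0:ℂ)*(c2:ℂ)) * z^6 + (-(c2:ℂ)*(c3:ℂ) + (c1:ℂ)*(c3:ℂ) - (c1:ℂ)*(c2:ℂ) + (c0:ℂ)*(c2:ℂ)) * z^7 + ((c2:ℂ)*(c3:ℂ) - (c1:ℂ)*(c3:ℂ) + (c1:ℂ)*(c2:ℂ) - (c0:ℂ)*(c3:ℂ)) * z^9 + (-(c3:ℂ)*(c3:ℂ) - (c2:ℂ)*(c2:ℂ) + (c1:ℂ)*(c3:ℂ) + (c0:ℂ)*(c3:ℂ)) * z^10 + ((c3:ℂ)*(c3:ℂ) + (c2:ℂ)*(c2:ℂ) - (c1:ℂ)*(c3:ℂ) - (c0:ℂ)*(c2:ℂ)) * z^11 + (-(c2:ℂ)*(c3:ℂ) + (c1:ℂ)*(c3:ℂ) + (c0:ℂ)*(c2:ℂ))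 * z^12 + (-(c1:ℂ)*(c2:ℂ)) * z^13 + ((c2:ℂ)*(c3:ℂ) + (c1:ℂ)*(c2:ℂ) - (c0:ℂ)*(c3:ℂ)) * z^14 + (-(c3:ℂ)*(c3:ℂ) - (c2:ℂ)*(c2:ℂ) + (c0:ℂ)*(c3:ℂ)) * z^15 + ((c3:ℂ)*(c3:ℂ) + (c2:ℂ)*(c2:ℂ) - (c1:ℂ)*(c3:ℂ)) * z^16 + (-(c2:ℂ)*(c3:ℂ) + (c1:ℂ)*(c3:ℂ)) * z^17 + ((c2:ℂ)*(c3:ℂ) - (c0:ℂ)*(c3:ℂ)) * z^19 + (-(c3:ℂ)*(c3:ℂ) + (c0:ℂ)*(c3:ℂ)) * z^20 + ((c3:ℂ)*(c3:ℂ) - (c1:ℂ)*(c3:ℂ)) * z^21 + ((c1:ℂ)*(c3:ℂ)) * z^22 + (-(c2:ℂ)*(c3:ℂ)) * z^23 + ((c2:ℂ)*(c3:ℂ)) * z^24 + (-(c3:ℂ)*(c3:ℂ)) * z^25 + ((c3:ℂ)*(c3:ℂ)) * z^26) * hsum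
  -- r is a real square root of 5
  have hrre : ((r.re : ℝ) : ℂ) = r := Complex.conj_eq_iff_re.mp hrconj
  set rr : ℝ := r.re with hrrdef
  have hrr2 : rr ^ 2 = 5 := by
    have : ((rr^2 : ℝ) : ℂ) = ((5:ℝ):ℂ) := by push_cast; rw [hrre]; exact_mod_cast hr2
    exact_mod_cast this
  have hrrpm : rr = Real.sqrt 5 ∨ rr = -Real.sqrt 5 := by
    have hfac : (rr - Real.sqrt 5) * (rr + Real.sqrt 5) = 0 := by
      linear_combination hrr2 - s5
    rcases mul_eq_zero.mp hfac with h | h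
    · left; linarith
    · right; linarith
  -- x and x2
  set x : ℝ := ‖τ v‖ ^ 2 with hxdef
  set x2 : ℝ := ‖τ₂ v‖ ^ 2 with hx2def
  have hxC : ((x:ℝ):ℂ) = τ v * (starRingEnd ℂ) (τ v) := by
    rw [Complex.mul_conj, hxdef, Complex.sq_norm]
  have hx2C : ((x2:ℝ):ℂ) = τ₂ v * (starRingEnd ℂ) (τ₂ v) := by
    rw [Complex.mul_conj, hx2def, Complex.sq_norm]
  have hxval : x = (A:ℝ) + (B:ℝ) * rr := by
    have h : ((x:ℝ):ℂ) = (((A:ℝ) + (B:ℝ) * rr : ℝ):ℂ) := by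
      rw [hxC, hX]
      push_cast
      rw [hrre]
    exact_mod_cast h
  have hx2val : x2 = (A:ℝ) - (B:ℝ) * rr := by
    have h : ((x2:ℝ):ℂ) = (((A:ℝ) - (B:ℝ) * rr : ℝ):ℂ) := by
      rw [hx2C, hY]
      push_cast
      rw [hrre]
    exact_mod_cast h
  -- positivity
  have hv0 : v ≠ 0 := by
    rw [hv]
    intro h
    exact Units.ne_zero u (RingOfIntegers.coe_eq_zero_iff.mp h)
  have hxpos : 0 < x := by
    rw [hxdef]
    have hne : τ v ≠ 0 := by rwa [_root_.map_ne_zero]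
    exact pow_pos (norm_pos_iff.mpr hne) 2
  have hx2pos : 0 < x2 := by
    rw [hx2def]
    have hne : τ₂ v ≠ 0 := by rwa [_root_.map_ne_zero]
    exact pow_pos (norm_pos_iff.mpr hne) 2
  -- integrality
  have hvint : IsIntegral ℤ v := RingOfIntegers.isIntegral_coe (u : 𝓞 K)
  have hxint : IsIntegral ℤ x := by
    have h1 : IsIntegral ℤ (τ v) := hvint.map τ.toIntAlgHom
    have h2 : IsIntegral ℤ ((starRingEnd ℂ) (τ v)) := h1.map (starRingEnd ℂ).toIntAlgHom
    have h3 := h1.mul h2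
    rw [← hxC] at h3
    rwa [show ((x:ℝ):ℂ) = algebraMap ℝ ℂ x from rfl,
      isIntegral_algebraMap_iff Complex.ofReal_injective] at h3
  have hx2int : IsIntegral ℤ x2 := by
    have h1 : IsIntegral ℤ (τ₂ v) := hvint.map τ₂.toIntAlgHom
    have h2 : IsIntegral ℤ ((starRingEnd ℂ) (τ₂ v)) := h1.map (starRingEnd ℂ).toIntAlgHom
    have h3 := h1.mul h2
    rw [← hx2C] at h3
    rwa [show ((x2:ℝ):ℂ) = algebraMap ℝ ℂ x2 from rfl,
      isIntegral_algebraMap_iff Complex.ofReal_injective] at h3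
  -- inverses
  set w : K := ((↑(u⁻¹) : 𝓞 K) : K) with hw
  have hvw : v * w = 1 := by
    rw [hv, hw]
    show algebraMap (𝓞 K) K (u : 𝓞 K) * algebraMap (𝓞 K) K (↑u⁻¹ : 𝓞 K) = 1
    rw [← map_mul, Units.mul_inv, map_one]
  have hwint : IsIntegral ℤ w := RingOfIntegers.isIntegral_coe _
  have hxinvint : IsIntegral ℤ x⁻¹ := by
    have habs : x * ‖τ w‖ ^ 2 = 1 := by
      rw [hxdef, ← mul_pow, ← norm_mul, ← map_mul, hvw, map_one, norm_one, one_pow]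
    have hxinv : x⁻¹ = ‖τ w‖ ^ 2 := by
      field_simp at habs ⊢
      linarith [habs]
    rw [hxinv]
    have hwC : ((‖τ w‖ ^ 2 : ℝ) : ℂ) = τ w * (starRingEnd ℂ) (τ w) := by
      rw [Complex.mul_conj, Complex.sq_norm]
    have h1 : IsIntegral ℤ (τ w) := hwint.map τ.toIntAlgHom
    have h2 : IsIntegral ℤ ((starRingEnd ℂ) (τ w)) := h1.map (starRingEnd ℂ).toIntAlgHom
    have h3 := h1.mul h2
    rw [← hwC] at h3
    rwa [show ((‖τ w‖ ^ 2 : ℝ):ℂ) = algebraMap ℝ ℂ _ from rfl,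
      isIntegral_algebraMap_iff Complex.ofReal_injective] at h3
  -- a, b with x = a + b√5 and x2 = a - b√5
  obtain ⟨a, b, hxa, hx2a⟩ : ∃ a b : ℚ, x = (a:ℝ) + (b:ℝ) * Real.sqrt 5 ∧
      x2 = (a:ℝ) - (b:ℝ) * Real.sqrt 5 := by
    rcases hrrpm with h | h
    · exact ⟨A, B, by rw [hxval, h], by rw [hx2val, h]⟩
    · refine ⟨A, -B, ?_, ?_⟩
      · rw [hxval, h]; push_cast; ring
      · rw [hx2val, h]; push_cast; ring
  -- apply the key lemma
  obtain ⟨m, hxm⟩ := keyA x a b hxa hxpos hxint hxinvint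
  obtain ⟨p, q, hp1, hp2⟩ := rep_phi_zpow m
  have hab : a = p ∧ b = q := quniq (by rw [← hxa, hxm, hp1])
  have hx2m : x2 = (-goldenRatio) ^ (-m) := by
    rw [hx2a, hab.1, hab.2, hp2]
  rcases Int.even_or_odd m with ⟨k, hk⟩ | hodd
  · refine ⟨k, ?_⟩
    have hxk : x = (goldenRatio ^ k) ^ 2 := by
      rw [hxm, hk, sq, ← zpow_add₀ goldenRatio_ne_zero]
    have habs0 : 0 ≤ ‖τ v‖ := norm_nonneg _
    have hgk : 0 < goldenRatio ^ k := zpow_pos goldenRatio_pos k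
    have hfac : (‖τ v‖ - goldenRatio ^ k) *
        (‖τ v‖ + goldenRatio ^ k) = 0 := by
      rw [hxdef] at hxk
      linear_combination hxk
    rcases mul_eq_zero.mp hfac with h | h
    · have : ‖τ v‖ = goldenRatio ^ k := by linarith
      exact this
    · exfalso; linarith
  · exfalso
    have hneg : (-goldenRatio) ^ (-m) = -(goldenRatio ^ (-m)) := (hodd.neg).neg_zpow goldenRatio
    rw [hneg] at hx2m
    have : 0 < goldenRatio ^ (-m) := zpow_pos goldenRatio_pos _
    rw [hx2m] at hx2pos
    linarith
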